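/- Suppose X is a Banach lattice with a countable π-basis B. Then for a sequence (x_n) and a vector x in X, the following are equivalent: (i) x_n order converges to x; (ii) x_n σ-order converges to x; (iii) for every b ∈ B there exists z ∈ X such that |x_n − x| ≤ z for all but finitely many n, and b is not strictly below z (i.e., ¬(b < z)). -/

import Mathlib

open Filter

universe u

/-- `(x n)` order converges to `x₀`: there is a decreasing net `(z μ)`, indexed by a
(nonempty, upward directed) preordered set, with infimum `0`, such that for every `μ`,
`|x n − x₀| ≤ z μ` for all but finitely many `n`. -/
def OrderConvergesTo {X : Type u} [Lattice X] [AddCommGroup X] (x : ℕ → X) (x₀ : X) : Prop :=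
  ∃ (ι : Type u) (le : ι → ι → Prop), Nonempty ι ∧
    (∀ a, le a a) ∧ (∀ a b c, le a b → le b c → le a c) ∧
    (∀ a b, ∃ c, le a c ∧ le b c) ∧
    ∃ z : ι → X, (∀ a b, le a b → z b ≤ z a) ∧ IsGLB (Set.range z) 0 ∧
      ∀ μ, ∀ᶠ n in atTop, |x n - x₀| ≤ z μ

/-- `(x n)` σ-order converges to `x₀`. -/
def SigmaOrderConvergesTo {X : Type u} [Lattice X] [AddCommGroup X] (x : ℕ → X) (x₀ : X) :
    Prop :=
  ∃ z : ℕ → X, Antitone z ∧ IsGLB (Set.range z) 0 ∧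
    ∀ m, ∀ᶠ n in atTop, |x n - x₀| ≤ z m

/-- In a Banach lattice with a countable π-basis `B`, the following are
equivalent for a sequence `(x n)` and a vector `x₀`: (i) order convergence to `x₀`;
(ii) σ-order convergence to `x₀`; (iii) for every `b ∈ B` there is `z` eventually
dominating `|x n − x₀|` with `¬ b < z`. -/
theorem orderConv_iff_sigmaOrderConv_iff_piBasis_criterion {X : Type u}
    [NormedAddCommGroup X] [Lattice X] [HasSolidNorm X] [IsOrderedAddMonoid X]
    [NormedSpace ℝ X] [CompleteSpace X]
    (B : Set X) (hBc : B.Countable) (hBpos : ∀ b ∈ B, 0 < b)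
    (hBpi : ∀ x : X, 0 < x → ∃ b ∈ B, b < x)
    (x : ℕ → X) (x₀ : X) :
    (OrderConvergesTo x x₀ ↔ SigmaOrderConvergesTo x x₀) ∧
      (SigmaOrderConvergesTo x x₀ ↔
        ∀ b ∈ B, ∃ z : X, (∀ᶠ n in atTop, |x n - x₀| ≤ z) ∧ ¬ b < z) := by
  have h1 : OrderConvergesTo x x₀ →
      ∀ b ∈ B, ∃ z : X, (∀ᶠ n in atTop, |x n - x₀| ≤ z) ∧ ¬ b < z := by
    rintro ⟨ι, le, hne, hrefl, htrans, hdir, z, hanti, hglb, hev⟩ b hb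
    by_contra h
    push_neg at h
    have hb0 : b ≤ 0 := hglb.2 (fun w hw => by
      obtain ⟨μ, rfl⟩ := hw
      exact (h (z μ) (hev μ)).le)
    exact absurd hb0 (hBpos b hb).not_ge
  have h2 : SigmaOrderConvergesTo x x₀ →
      ∀ b ∈ B, ∃ z : X, (∀ᶠ n in atTop, |x n - x₀| ≤ z) ∧ ¬ b < z := by
    rintro ⟨z, hanti, hglb, hev⟩ b hb
    by_contra h
    push_neg at h
    have hb0 : b ≤ 0 := hglb.2 (fun w hw => by
      obtain ⟨m, rfl⟩ := hw
      exact (h (z m) (hev m)).le)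
    exact absurd hb0 (hBpos b hb).not_ge
  have h3 : (∀ b ∈ B, ∃ z : X, (∀ᶠ n in atTop, |x n - x₀| ≤ z) ∧ ¬ b < z) →
      SigmaOrderConvergesTo x x₀ := by
    intro hcrit
    rcases B.eq_empty_or_nonempty with hB | hBne
    · refine ⟨fun _ => 0, antitone_const, ⟨?_, ?_⟩, ?_⟩
      · rintro w ⟨m, rfl⟩; exact le_refl _
      · intro c hc; exact hc ⟨0, rfl⟩
      · intro m
        filter_upwards with n
        by_contra hlt
        have hpos : 0 < |x n - x₀| :=
          lt_of_le_of_ne (abs_nonneg _) (fun h => hlt (le_of_eq h.symm))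
        obtain ⟨b, hbB, _⟩ := hBpi _ hpos
        simp [hB] at hbB
    · obtain ⟨f, hf⟩ := Set.Countable.exists_eq_range hBc hBne
      choose z hz1 hz2 using fun k => hcrit (f k) (by rw [hf]; exact Set.mem_range_self k)
      set y : ℕ → X :=
        fun m => (Finset.range (m+1)).inf'
          (Finset.nonempty_range_iff.mpr (Nat.succ_ne_zero m)) z with hy
      have hyz : ∀ m, y m ≤ z m := fun m => Finset.inf'_le _ (Finset.self_mem_range_succ m)
      have hyanti : Antitone y := by
        intro a b hab
        apply Finset.le_inf'
        intro k hk
        exact Finset.inf'_le _ (Finset.mem_range.mpr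
          (lt_of_lt_of_le (Finset.mem_range.mp hk) (by omega)))
      have hev : ∀ m, ∀ᶠ n in atTop, |x n - x₀| ≤ y m := by
        intro m
        have h' : ∀ᶠ n in atTop, ∀ k ∈ Finset.range (m+1), |x n - x₀| ≤ z k :=
          (Filter.eventually_all_finset _).mpr (fun k _ => hz1 k)
        filter_upwards [h'] with n hn
        exact Finset.le_inf' _ _ hn
      have hy0 : ∀ m, 0 ≤ y m := fun m => by
        obtain ⟨n, hn⟩ := (hev m).exists
        exact (abs_nonneg _).trans hn
      refine ⟨y, hyanti, ⟨?_, ?_⟩, hev⟩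
      · rintro w ⟨m, rfl⟩; exact hy0 m
      · intro c hc
        by_contra hc0
        have hpos : 0 < c ⊔ 0 := by
          rcases lt_or_eq_of_le (le_sup_right : (0:X) ≤ c ⊔ 0) with h | h
          · exact h
          · exact absurd (sup_eq_right.mp h.symm) hc0
        obtain ⟨b, hbB, hblt⟩ := hBpi _ hpos
        rw [hf] at hbB
        obtain ⟨k, rfl⟩ := hbB
        have : f k < z k :=
          lt_of_lt_of_le hblt (le_trans (sup_le (hc ⟨k, rfl⟩) (hy0 k)) (hyz k))
        exact hz2 k this
  have h4 : SigmaOrderConvergesTo x x₀ → OrderConvergesTo x x₀ := by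
    rintro ⟨z, hanti, hglb, hev⟩
    refine ⟨ULift ℕ, fun a b => a.down ≤ b.down, ⟨⟨0⟩⟩, fun a => le_refl _,
      fun a b c => le_trans,
      fun a b => ⟨⟨max a.down b.down⟩, le_max_left _ _, le_max_right _ _⟩,
      fun μ => z μ.down, fun a b hab => hanti hab, ?_, fun μ => hev μ.down⟩
    have hr : Set.range (fun μ : ULift ℕ => z μ.down) = Set.range z := by
      ext w
      constructor
      · rintro ⟨μ, rfl⟩; exact ⟨μ.down, rfl⟩
      · rintro ⟨m, rfl⟩; exact ⟨⟨m⟩, rfl⟩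
    rw [hr]; exact hglb
  exact ⟨⟨fun h => h3 (h1 h), h4⟩, ⟨h2, h3⟩⟩
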